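/- If χ(G) = k and d < k/2, then for any partition of V into d classes, the number of edges of G with both endpoints in the same class is at least k²/(4d). -/

import Mathlib

open Finset SimpleGraph

attribute [local instance] Classical.propDecidable

/-- A graph with chromatic number `m` has at least `m.choose 2` edges. -/
lemma edge_lb_of_chromaticNumber {W : Type*} [Fintype W] (H : SimpleGraph W) (m : ℕ)
    (hm : H.chromaticNumber = m) : m.choose 2 ≤ H.edgeFinset.card := by
  classical
  have hcol : H.Colorable m := chromaticNumber_le_iff_colorable.mp (le_of_eq hm)
  obtain ⟨f⟩ := hcol
  have hsurj : Set.SurjOn (Sym2.map f) ↑H.edgeFinset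
      ↑(⊤ : SimpleGraph (Fin m)).edgeFinset := by
    intro e he
    induction e using Sym2.ind with
    | _ i j =>
      simp only [Finset.coe_sort_coe, mem_coe, mem_edgeFinset, mem_edgeSet, top_adj] at he
      by_contra hcon
      have hnoedge : ∀ u v, H.Adj u v → ¬(f u = i ∧ f v = j) := by
        rintro u v huv ⟨h1, h2⟩
        exact hcon ⟨s(u, v), by simpa [mem_edgeFinset] using huv, by simp [h1, h2]⟩
      let g : W → {x : Fin m // x ≠ j} := fun v => if h : f v = j then ⟨i, he⟩ else ⟨f v, h⟩
      have hgvalid : ∀ u v, H.Adj u v → g u ≠ g v := by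
        intro u v huv hg
        by_cases hu : f u = j <;> by_cases hv : f v = j <;>
          simp only [g, hu, hv, dif_pos, dif_neg, not_false_iff, Subtype.mk.injEq] at hg
        · exact f.valid huv (hu.trans hv.symm)
        · exact hnoedge v u huv.symm ⟨hg.symm, hu⟩
        · exact hnoedge u v huv ⟨hg, hv⟩
        · exact f.valid huv hg
      have C : H.Coloring {x : Fin m // x ≠ j} :=
        Coloring.mk g (fun {u v} h => hgvalid u v h)
      have hc2 := C.colorable
      have hcard : Fintype.card {x : Fin m // x ≠ j} = m - 1 := by
        have h1 : Fintype.card {x : Fin m // ¬ x = j} =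
            Fintype.card (Fin m) - Fintype.card {x : Fin m // x = j} :=
          Fintype.card_subtype_compl _
        simp only [Fintype.card_subtype_eq, Fintype.card_fin] at h1
        exact h1
      rw [hcard] at hc2
      have hle : (m : ℕ∞) ≤ ((m - 1 : ℕ) : ℕ∞) := hm ▸ hc2.chromaticNumber_le
      have hmle : m ≤ m - 1 := by exact_mod_cast hle
      have hm1 : 0 < m := j.pos
      omega
  calc m.choose 2 = (⊤ : SimpleGraph (Fin m)).edgeFinset.card := by
        rw [card_edgeFinset_top_eq_card_choose_two, Fintype.card_fin]
    _ ≤ H.edgeFinset.card := Finset.card_le_card_of_surjOn _ hsurj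

/-- If `χ(G) = k` and `d < k/2`, then for any partition of `V` into `d` classes
(given by a coloring `c : V → Fin d`), the number of edges of `G` with both
endpoints in the same class is at least `k²/(4d)`. -/
theorem stmt_2 {V : Type*} [Fintype V] (G : SimpleGraph V) (k d : ℕ)
    (hk : G.chromaticNumber = k) (hd : 2 * d < k) (c : V → Fin d) :
    (k : ℝ) ^ 2 / (4 * d) ≤
      ((G.edgeFinset.filter (fun e => (e.map c).IsDiag)).card : ℝ) := by
  classical
  -- dispose of the case d = 0
  rcases Nat.eq_zero_or_pos d with hd0 | hd0
  · subst hd0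
    haveI : IsEmpty V := ⟨fun v => (c v).elim0⟩
    have h0 : G.chromaticNumber = 0 := chromaticNumber_eq_zero_of_isEmpty (G := G)
    rw [hk] at h0
    have : k = 0 := by exact_mod_cast h0
    omega
  -- set up the induced graphs on color classes
  set T : Fin d → Set V := fun i => {v | c v = i} with hT
  haveI : ∀ i, Fintype (T i) := fun i => Fintype.ofFinite _
  set Gi : (i : Fin d) → SimpleGraph (T i) := fun i => G.induce (T i) with hGi
  have hGcol : ∀ i, (Gi i).Colorable ((Gi i).chromaticNumber.toNat) := fun i =>
    colorable_chromaticNumber_of_fintype _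
  set m : Fin d → ℕ := fun i => (Gi i).chromaticNumber.toNat with hm
  have hmchr : ∀ i, (Gi i).chromaticNumber = m i := by
    intro i
    have h1 : (Gi i).chromaticNumber ≠ ⊤ :=
      chromaticNumber_ne_top_iff_exists.mpr ⟨_, (Gi i).colorable_of_fintype⟩
    exact (ENat.coe_toNat h1).symm
  -- Lemma A: k ≤ ∑ m i
  have hA : k ≤ ∑ i, m i := by
    have key : ∀ (u v : V), G.Adj u v → ∀ (a b : Fin d) (hu : c u = a) (hv : c v = b),
        a = b → HEq ((hGcol a).some ⟨u, hu⟩) ((hGcol b).some ⟨v, hv⟩) → False := by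
      rintro u v huv a b hu hv rfl hheq
      rw [heq_iff_eq] at hheq
      have hadj : (Gi a).Adj ⟨u, hu⟩ ⟨v, hv⟩ := by
        simp only [hGi, comap_adj, Function.Embedding.coe_subtype]
        exact huv
      exact ((hGcol a).some.valid hadj) hheq
    have F : G.Coloring ((i : Fin d) × Fin (m i)) := by
      refine Coloring.mk (fun v => ⟨c v, (hGcol (c v)).some ⟨v, rfl⟩⟩) ?_
      intro u v huv hF
      obtain ⟨h1, h2⟩ := Sigma.mk.inj_iff.mp hF
      exact key u v huv _ _ rfl rfl h1 h2
    have hcol := F.colorable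
    have hcard : Fintype.card ((i : Fin d) × Fin (m i)) = ∑ i, m i := by
      simp [Fintype.card_sigma]
    rw [hcard] at hcol
    have hle := hcol.chromaticNumber_le
    rw [hk] at hle
    exact_mod_cast hle
  -- Lemma B for each class
  have hB : ∀ i, (m i).choose 2 ≤ (Gi i).edgeFinset.card := fun i =>
    edge_lb_of_chromaticNumber _ _ (hmchr i)
  -- counting: the monochromatic edges contain the disjoint images of the class edges
  set M := G.edgeFinset.filter (fun e => (e.map c).IsDiag) with hM
  have hmemc : ∀ (i : Fin d) e, e ∈ ((Gi i).edgeFinset.image (Sym2.map Subtype.val)) →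
      ∀ v ∈ e, c v = i := by
    intro i e he v hv
    simp only [mem_image] at he
    obtain ⟨e', _, rfl⟩ := he
    rw [Sym2.mem_map] at hv
    obtain ⟨w, _, rfl⟩ := hv
    exact w.2
  have hcount : ∑ i, (Gi i).edgeFinset.card ≤ M.card := by
    have himg : ∀ i : Fin d, ((Gi i).edgeFinset.image (Sym2.map Subtype.val)) ⊆ M := by
      intro i e he
      have hmem := hmemc i e he
      simp only [mem_image] at he
      obtain ⟨e', he', rfl⟩ := he
      induction e' using Sym2.ind with
      | _ a b =>
        rw [mem_edgeFinset, mem_edgeSet] at he'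
        have hadj : G.Adj a.1 b.1 := by
          simpa only [hGi, comap_adj, Function.Embedding.coe_subtype] using he'
        rw [hM, mem_filter]
        constructor
        · rw [mem_edgeFinset, Sym2.map_pair_eq, mem_edgeSet]
          exact hadj
        · simp only [Sym2.map_pair_eq, Sym2.map_pair_eq, Sym2.mk_isDiag_iff]
          exact a.2.trans b.2.symm
    have hdisj : ∀ i ∈ (univ : Finset (Fin d)), ∀ j ∈ univ, i ≠ j →
        Disjoint ((Gi i).edgeFinset.image (Sym2.map Subtype.val))
          ((Gi j).edgeFinset.image (Sym2.map Subtype.val)) := by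
      intro i _ j _ hij
      rw [Finset.disjoint_left]
      intro e hei hej
      have hv : e.out.1 ∈ e := Sym2.out_fst_mem e
      exact hij ((hmemc i e hei e.out.1 hv).symm.trans (hmemc j e hej e.out.1 hv))
    calc ∑ i, (Gi i).edgeFinset.card
        = ∑ i, ((Gi i).edgeFinset.image (Sym2.map Subtype.val)).card := by
          refine Finset.sum_congr rfl fun i _ => ?_
          rw [Finset.card_image_of_injective _ (Sym2.map.injective Subtype.val_injective)]
      _ = (univ.biUnion fun i => (Gi i).edgeFinset.image (Sym2.map Subtype.val)).card :=
          (Finset.card_biUnion hdisj).symm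
      _ ≤ M.card := by
          apply Finset.card_le_card
          intro e he
          rw [Finset.mem_biUnion] at he
          obtain ⟨i, _, hei⟩ := he
          exact himg i hei
  -- put it together over the reals
  have hle : ∑ i, (m i).choose 2 ≤ M.card :=
    le_trans (Finset.sum_le_sum fun i _ => hB i) hcount
  have hS : (k : ℝ) ≤ ∑ i, (m i : ℝ) := by exact_mod_cast hA
  have hcs : (∑ i, (m i : ℝ)) ^ 2 ≤ (d : ℝ) * ∑ i, (m i : ℝ) ^ 2 := by
    have h := sq_sum_le_card_mul_sum_sq (s := (univ : Finset (Fin d)))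
      (f := fun i => (m i : ℝ))
    simpa using h
  have hM' : (∑ i, ((m i).choose 2 : ℝ)) ≤ (M.card : ℝ) := by exact_mod_cast hle
  have hsum2 : (∑ i, ((m i).choose 2 : ℝ))
      = ((∑ i, (m i : ℝ) ^ 2) - ∑ i, (m i : ℝ)) / 2 := by
    rw [← Finset.sum_sub_distrib, Finset.sum_div]
    refine Finset.sum_congr rfl fun i _ => ?_
    rw [Nat.cast_choose_two]
    ring
  have hd' : (1 : ℝ) ≤ (d : ℝ) := by exact_mod_cast hd0
  have hkd : 2 * (d : ℝ) < (k : ℝ) := by exact_mod_cast hd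
  have hk0 : (0 : ℝ) ≤ (k : ℝ) := Nat.cast_nonneg _
  rw [div_le_iff₀ (by positivity : (0 : ℝ) < 4 * (d : ℝ))]
  set S := ∑ i, (m i : ℝ)
  set Q := ∑ i, (m i : ℝ) ^ 2
  have hSk : S - (k : ℝ) ≥ 0 := by linarith
  nlinarith [mul_nonneg hSk (by linarith : (k : ℝ) - 2 * d ≥ 0),
    mul_nonneg hSk hSk, mul_nonneg hSk hk0, sq_nonneg (S - k)]
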